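/- Let X be a non-unital Banach *-algebra and X̃ its unitization. Then X is weakly central if and only if X̃ is weakly central. -/

import Mathlib

noncomputable section

def centerSet (X : Type*) [NonUnitalRing X] : Set X := {z | ∀ x : X, z * x = x * z}

def TwoSidedIdeal.IsModular {X : Type*} [NonUnitalRing X] (M : TwoSidedIdeal X) : Prop :=
  ∃ u : X, ∀ x : X, x * u - x ∈ M ∧ u * x - x ∈ M

def TwoSidedIdeal.IsMaxMod {X : Type*} [NonUnitalRing X] (M : TwoSidedIdeal X) : Prop :=
  M.IsModular ∧ M ≠ ⊤ ∧ ∀ N : TwoSidedIdeal X, M ≤ N → N ≠ ⊤ → N = M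

def WeaklyCentral (X : Type*) [NonUnitalRing X] : Prop :=
  (∀ M : TwoSidedIdeal X, M.IsMaxMod → ¬ centerSet X ⊆ (M : Set X)) ∧
  ∀ M N : TwoSidedIdeal X, M.IsMaxMod → N.IsMaxMod →
    (M : Set X) ∩ centerSet X = (N : Set X) ∩ centerSet X → M = N

namespace WCAux

variable {X : Type*} [NonUnitalRing X] [Module ℂ X] [SMulCommClass ℂ X X] [IsScalarTower ℂ X X]

local notation "XU" => Unitization ℂ X


lemma mem_of_eq_top {R : Type*} [NonUnitalRing R] {I : TwoSidedIdeal R} (h : I = ⊤) (x : R) :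
    x ∈ I := by rw [h]; exact TwoSidedIdeal.mem_top _

lemma inr_sub' {X : Type*} [NonUnitalRing X] [Module ℂ X] (a b : X) :
    ((a - b : X) : Unitization ℂ X) = (a : Unitization ℂ X) - (b : Unitization ℂ X) := by
  rw [sub_eq_add_neg, Unitization.inr_add, Unitization.inr_neg, sub_eq_add_neg]

/-- The relative-unit property. -/
def IsUnit' (M : TwoSidedIdeal X) (u : X) : Prop := ∀ x : X, x * u - x ∈ M ∧ u * x - x ∈ M

lemma smul_mem_of_unit {M : TwoSidedIdeal X} {u : X} (hu : IsUnit' M u)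
    {m : X} (hm : m ∈ M) (c : ℂ) : c • m ∈ M := by
  have h1 : (c • m) * u - c • m ∈ M := (hu (c • m)).1
  have h2 : m * (c • u) ∈ M := M.mul_mem_right m (c • u) hm
  have key : c • m = m * (c • u) - ((c • m) * u - c • m) := by
    rw [mul_smul_comm, ← smul_mul_assoc]; abel
  exact key ▸ M.sub_mem h2 h1

lemma eq_top_of_unit_mem {M : TwoSidedIdeal X} {u : X} (hu : IsUnit' M u)
    (h : u ∈ M) : M = ⊤ := by
  refine eq_top_iff.mpr fun x _ => ?_
  have h1 : x * u ∈ M := M.mul_mem_left x u h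
  have h2 : x * u - x ∈ M := (hu x).1
  have : x = x * u - (x * u - x) := by abel
  exact this ▸ M.sub_mem h1 h2

lemma centerSet_add {a b : X} (ha : a ∈ centerSet X) (hb : b ∈ centerSet X) :
    a + b ∈ centerSet X := fun x => by rw [add_mul, mul_add, ha x, hb x]

lemma centerSet_mul {a b : X} (ha : a ∈ centerSet X) (hb : b ∈ centerSet X) :
    a * b ∈ centerSet X := fun x => by
  rw [mul_assoc, hb x, ← mul_assoc, ha x, mul_assoc]

lemma centerSet_smul {a : X} (ha : a ∈ centerSet X) (c : ℂ) :
    c • a ∈ centerSet X := fun x => by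
  rw [smul_mul_assoc, mul_smul_comm, ha x]

lemma one_mem_centerSet : (1 : XU) ∈ centerSet XU := fun x => by rw [one_mul, mul_one]

lemma mem_centerSet_unitization {z : XU} : z ∈ centerSet XU ↔ z.snd ∈ centerSet X := by
  constructor
  · intro h x
    have := congrArg (fun w : XU => w.snd) (h (x : XU))
    simpa [Unitization.snd_mul, add_comm] using this
  · intro h w
    refine Unitization.ext (by simp [mul_comm]) ?_
    simp only [Unitization.snd_mul]
    rw [h w.snd]; abel

lemma coe_mem_centerSet {z : X} (hz : z ∈ centerSet X) : (z : XU) ∈ centerSet XU := by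
  rw [mem_centerSet_unitization, Unitization.snd_inr]; exact hz

/-- restriction of an ideal of the unitization to `X`. -/
def restr (N : TwoSidedIdeal XU) : TwoSidedIdeal X :=
  TwoSidedIdeal.mk' {x : X | (x : XU) ∈ N}
    (by simp only [Set.mem_setOf_eq, Unitization.inr_zero]; exact N.zero_mem)
    (fun {x y} hx hy => by
      simp only [Set.mem_setOf_eq, Unitization.inr_add]; exact N.add_mem hx hy)
    (fun {x} hx => by
      simp only [Set.mem_setOf_eq, Unitization.inr_neg]; exact N.neg_mem hx)
    (fun {x y} hy => by
      simp only [Set.mem_setOf_eq, Unitization.inr_mul]; exact N.mul_mem_left _ _ hy)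
    (fun {x y} hx => by
      simp only [Set.mem_setOf_eq, Unitization.inr_mul]; exact N.mul_mem_right _ _ hx)

lemma mem_restr {N : TwoSidedIdeal XU} {x : X} : x ∈ restr N ↔ (x : XU) ∈ N := by
  simp [restr, TwoSidedIdeal.mem_mk']

/-- extension of a modular ideal to the unitization. -/
def extI (M : TwoSidedIdeal X) (u : X) (hu : IsUnit' M u) : TwoSidedIdeal XU :=
  TwoSidedIdeal.mk' {y : XU | y.snd + y.fst • u ∈ M}
    (by simp only [Set.mem_setOf_eq, Unitization.snd_zero, Unitization.fst_zero, zero_smul,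
          add_zero]; exact M.zero_mem)
    (fun {x y} hx hy => by
      simp only [Set.mem_setOf_eq, Unitization.snd_add, Unitization.fst_add, add_smul] at *
      have := M.add_mem hx hy
      convert this using 1; abel)
    (fun {x} hx => by
      simp only [Set.mem_setOf_eq, Unitization.snd_neg, Unitization.fst_neg, neg_smul] at *
      have := M.neg_mem hx
      convert this using 1; abel)
    (fun {a y} hy => by
      simp only [Set.mem_setOf_eq] at *
      have key : (a * y).snd + (a * y).fst • u =
          a.fst • (y.snd + y.fst • u) + a.snd * (y.snd + y.fst • u)
            - y.fst • (a.snd * u - a.snd) := by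
        simp only [Unitization.snd_mul, Unitization.fst_mul, smul_add, mul_add, smul_sub,
          smul_smul, mul_smul_comm]
        abel
      rw [key]
      exact M.sub_mem (M.add_mem (smul_mem_of_unit hu hy _) (M.mul_mem_left _ _ hy))
        (smul_mem_of_unit hu (hu a.snd).1 _))
    (fun {y a} hy => by
      simp only [Set.mem_setOf_eq] at *
      have key : (y * a).snd + (y * a).fst • u =
          a.fst • (y.snd + y.fst • u) + (y.snd + y.fst • u) * a.snd
            - y.fst • (u * a.snd - a.snd) := by
        simp only [Unitization.snd_mul, Unitization.fst_mul, smul_add, add_mul, smul_sub,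
          smul_smul, smul_mul_assoc]
        rw [mul_comm y.fst a.fst]
        abel
      rw [key]
      exact M.sub_mem (M.add_mem (smul_mem_of_unit hu hy _) (M.mul_mem_right _ _ hy))
        (smul_mem_of_unit hu (hu a.snd).2 _))

lemma mem_extI {M : TwoSidedIdeal X} {u : X} {hu : IsUnit' M u} {y : XU} :
    y ∈ extI M u hu ↔ y.snd + y.fst • u ∈ M := by
  simp [extI, TwoSidedIdeal.mem_mk']

lemma coe_mem_extI {M : TwoSidedIdeal X} {u : X} {hu : IsUnit' M u} {x : X} :
    (x : XU) ∈ extI M u hu ↔ x ∈ M := by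
  rw [mem_extI]; simp

lemma restr_extI {M : TwoSidedIdeal X} {u : X} (hu : IsUnit' M u) :
    restr (extI M u hu) = M :=
  TwoSidedIdeal.ext fun x => by rw [mem_restr, coe_mem_extI]

lemma one_sub_mem_extI {M : TwoSidedIdeal X} {u : X} (hu : IsUnit' M u) :
    1 - (u : XU) ∈ extI M u hu := by
  rw [mem_extI]
  have : ((1 : XU) - (u : XU)).snd + ((1 : XU) - (u : XU)).fst • u = 0 := by
    rw [sub_eq_add_neg]
    simp
  rw [this]
  exact M.zero_mem

lemma one_mem_extI_iff {M : TwoSidedIdeal X} {u : X} {hu : IsUnit' M u} :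
    (1 : XU) ∈ extI M u hu ↔ u ∈ M := by
  rw [mem_extI]
  show (0 : X) + (1 : ℂ) • u ∈ M ↔ u ∈ M
  rw [zero_add, one_smul]

/-- key identity. -/
lemma coe_snd_add_smul (y : XU) (u : X) :
    ((y.snd + y.fst • u : X) : XU) = y - Unitization.inl y.fst * (1 - (u : XU)) := by
  rw [sub_eq_add_neg]
  refine Unitization.ext ?_ ?_ <;>
    simp [sub_eq_add_neg, Unitization.snd_mul, mul_add, smul_neg]

lemma snd_add_smul_mem_restr {N : TwoSidedIdeal XU} {u : X} (hu1 : 1 - (u : XU) ∈ N)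
    {y : XU} (hy : y ∈ N) : y.snd + y.fst • u ∈ restr N := by
  rw [mem_restr, coe_snd_add_smul]
  exact N.sub_mem hy (N.mul_mem_left _ _ hu1)

lemma extI_isMaxMod {M : TwoSidedIdeal X} (hM : M.IsMaxMod) {u : X} (hu : IsUnit' M u) :
    (extI M u hu).IsMaxMod := by
  refine ⟨⟨1, fun x => by simp [(extI M u hu).zero_mem]⟩, ?_, ?_⟩
  · intro h
    exact hM.2.1 (eq_top_of_unit_mem hu (one_mem_extI_iff.mp (mem_of_eq_top h _)))
  · intro K hle hKtop
    have h1uK : 1 - (u : XU) ∈ K := hle (one_sub_mem_extI hu)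
    have hK0 : restr K = M := by
      refine hM.2.2 (restr K) (fun x hx => mem_restr.mpr (hle (coe_mem_extI.mpr hx))) ?_
      intro htop
      have huK : (u : XU) ∈ K := mem_restr.mp (mem_of_eq_top htop _)
      have : (1 : XU) ∈ K := by
        have := K.add_mem h1uK huK; simpa using this
      exact hKtop (K.eq_top this)
    refine le_antisymm (fun y hy => ?_) hle
    rw [mem_extI, ← hK0]
    exact snd_add_smul_mem_restr h1uK hy

lemma exists_unit_coe {N : TwoSidedIdeal XU} (hN : N.IsMaxMod)
    (hx : ∃ x : X, (x : XU) ∉ N) : ∃ u : X, 1 - (u : XU) ∈ N := by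
  classical
  set J : TwoSidedIdeal XU := TwoSidedIdeal.mk'
    {y : XU | ∃ n ∈ N, ∃ x : X, y = n + (x : XU)}
    ⟨0, N.zero_mem, 0, by simp⟩
    (fun {y z} ⟨n1, hn1, x1, h1⟩ ⟨n2, hn2, x2, h2⟩ =>
      ⟨n1 + n2, N.add_mem hn1 hn2, x1 + x2, by
        rw [h1, h2, Unitization.inr_add]; abel⟩)
    (fun {y} ⟨n, hn, x, h⟩ => ⟨-n, N.neg_mem hn, -x, by rw [h, Unitization.inr_neg]; abel⟩)
    (fun {a y} ⟨n, hn, x, h⟩ =>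
      ⟨a * n, N.mul_mem_left _ _ hn, a.fst • x + a.snd * x, by
        rw [h, mul_add]
        congr 1
        refine Unitization.ext (by simp) (by simp [Unitization.snd_mul])⟩)
    (fun {y a} ⟨n, hn, x, h⟩ =>
      ⟨n * a, N.mul_mem_right _ _ hn, a.fst • x + x * a.snd, by
        rw [h, add_mul]
        congr 1
        refine Unitization.ext (by simp) (by simp [Unitization.snd_mul])⟩) with hJ
  have hNJ : N ≤ J := fun y hy => by
    rw [hJ, TwoSidedIdeal.mem_mk']; exact ⟨y, hy, 0, by simp⟩
  have hJtop : J = ⊤ := by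
    by_contra h
    obtain ⟨x, hxN⟩ := hx
    refine hxN ?_
    have := hN.2.2 J hNJ h
    rw [← this, hJ, TwoSidedIdeal.mem_mk']
    exact ⟨0, N.zero_mem, x, by simp⟩
  have h1 : (1 : XU) ∈ J := mem_of_eq_top hJtop _
  rw [hJ, TwoSidedIdeal.mem_mk'] at h1
  obtain ⟨n, hn, x, hx1⟩ := h1
  exact ⟨x, by rw [show (1 : XU) - (x : XU) = n by rw [hx1]; abel]; exact hn⟩

lemma restr_isUnit' {N : TwoSidedIdeal XU} {u : X} (hu1 : 1 - (u : XU) ∈ N) :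
    IsUnit' (restr N) u := by
  intro x
  constructor
  · rw [mem_restr]
    have : ((x * u - x : X) : XU) = -((x : XU) * (1 - (u : XU))) := by
      rw [inr_sub', Unitization.inr_mul, mul_sub, mul_one]; abel
    rw [this]
    exact N.neg_mem (N.mul_mem_left _ _ hu1)
  · rw [mem_restr]
    have : ((u * x - x : X) : XU) = -((1 - (u : XU)) * (x : XU)) := by
      rw [inr_sub', Unitization.inr_mul, sub_mul, one_mul]; abel
    rw [this]
    exact N.neg_mem (N.mul_mem_right _ _ hu1)

lemma restr_isMaxMod {N : TwoSidedIdeal XU} (hN : N.IsMaxMod) {u : X}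
    (hu1 : 1 - (u : XU) ∈ N) (hx : ∃ x : X, (x : XU) ∉ N) :
    (restr N).IsMaxMod := by
  have hru := restr_isUnit' (N := N) hu1
  refine ⟨⟨u, hru⟩, ?_, ?_⟩
  · intro h
    obtain ⟨x, hxN⟩ := hx
    exact hxN (mem_restr.mp (mem_of_eq_top h _))
  · intro K hKge hKtop
    have huK : IsUnit' K u := fun x => ⟨hKge (hru x).1, hKge (hru x).2⟩
    have hNle : N ≤ extI K u huK := fun y hy => by
      rw [mem_extI]
      exact hKge (snd_add_smul_mem_restr hu1 hy)
    have hne : extI K u huK ≠ ⊤ := by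
      intro h
      have : u ∈ K := one_mem_extI_iff.mp (mem_of_eq_top h _)
      exact hKtop (eq_top_of_unit_mem huK this)
    have := hN.2.2 _ hNle hne
    rw [← restr_extI huK, this]

lemma extI_restr_eq {N : TwoSidedIdeal XU} (hN : N.IsMaxMod) {u : X}
    (hu1 : 1 - (u : XU) ∈ N) (hru : IsUnit' (restr N) u) :
    extI (restr N) u hru = N := by
  refine hN.2.2 _ (fun y hy => mem_extI.mpr (snd_add_smul_mem_restr hu1 hy)) ?_
  intro h
  have : u ∈ restr N := one_mem_extI_iff.mp (mem_of_eq_top h _)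
  rw [mem_restr] at this
  have h1 : (1 : XU) ∈ N := by
    have := N.add_mem hu1 this; simpa using this
  exact hN.2.1 (N.eq_top h1)

lemma extI_unit_irrel {M : TwoSidedIdeal X} {u v : X} (hu : IsUnit' M u) (hv : IsUnit' M v) :
    extI M u hu = extI M v hv := by
  have huv : u - v ∈ M := by
    have h1 : u * v - v ∈ M := (hu v).2
    have h2 : u * v - u ∈ M := (hv u).1
    have : u - v = (u * v - v) - (u * v - u) := by abel
    exact this ▸ M.sub_mem h1 h2
  refine TwoSidedIdeal.ext fun y => ?_
  rw [mem_extI, mem_extI]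
  have key : y.snd + y.fst • u = (y.snd + y.fst • v) + y.fst • (u - v) := by
    rw [smul_sub]; abel
  constructor
  · intro h
    have := M.sub_mem (key ▸ h) (smul_mem_of_unit hu huv y.fst)
    simpa using this
  · intro h
    rw [key]
    exact M.add_mem h (smul_mem_of_unit hu huv y.fst)

lemma extI_congr {M M' : TwoSidedIdeal X} (h : M = M') {u : X} (hu : IsUnit' M u)
    (hu' : IsUnit' M' u) : extI M u hu = extI M' u hu' := by
  subst h; rfl

/-- the copy of `X` inside the unitization, as a two-sided ideal. -/
def unitIdeal : TwoSidedIdeal XU :=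
  TwoSidedIdeal.mk' {y : XU | y.fst = 0}
    (by simp) (fun {x y} hx hy => by simp_all) (fun {x} hx => by simp_all)
    (fun {x y} hy => by simp_all) (fun {x y} hx => by simp_all)

lemma mem_unitIdeal {y : XU} : y ∈ (unitIdeal : TwoSidedIdeal XU) ↔ y.fst = 0 := by
  exact TwoSidedIdeal.mem_mk' _ _ _ _ _ _ _

lemma coe_mem_unitIdeal (x : X) : (x : XU) ∈ (unitIdeal : TwoSidedIdeal XU) := by
  rw [mem_unitIdeal]; simp

lemma unitIdeal_isMaxMod : (unitIdeal : TwoSidedIdeal XU).IsMaxMod := by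
  refine ⟨⟨1, fun x => by simp [TwoSidedIdeal.zero_mem]⟩, ?_, ?_⟩
  · intro h
    have : (1 : XU) ∈ (unitIdeal : TwoSidedIdeal XU) := mem_of_eq_top h _
    rw [mem_unitIdeal] at this
    simp at this
  · intro K hle hKtop
    refine le_antisymm (fun y hy => ?_) hle
    rw [mem_unitIdeal]
    by_contra hf
    have h1 : Unitization.inl y.fst = y - ((y.snd : XU)) := by
      rw [sub_eq_add_neg]
      refine Unitization.ext (by simp) (by simp)
    have h2 : Unitization.inl y.fst ∈ K := by
      rw [h1]
      exact K.sub_mem hy (hle (coe_mem_unitIdeal y.snd))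
    have h3 : (1 : XU) ∈ K := by
      have := K.mul_mem_left (Unitization.inl y.fst⁻¹) _ h2
      rwa [Unitization.inl_mul_inl, inv_mul_cancel₀ hf, Unitization.inl_one] at this
    exact hKtop (K.eq_top h3)

lemma eq_unitIdeal {N : TwoSidedIdeal XU} (hN : N.IsMaxMod)
    (h : ∀ x : X, (x : XU) ∈ N) : N = unitIdeal := by
  refine unitIdeal_isMaxMod.2.2 N (fun y hy => ?_) hN.2.1
  rw [mem_unitIdeal] at hy
  have : y = ((y.snd : X) : XU) := by
    refine Unitization.ext (by simp [hy]) (by simp)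
  rw [this]
  exact h y.snd

/-- key dichotomy lemma. -/
lemma center_shift {M N : TwoSidedIdeal X} (hM : M.IsMaxMod) (hN : N.IsMaxMod)
    {uM uN : X} (huM : IsUnit' M uM) (huN : IsUnit' N uN)
    (hZ : (M : Set X) ∩ centerSet X = (N : Set X) ∩ centerSet X)
    {c : X} (hc : c ∈ centerSet X) (hcM : c + uM ∈ M) : c + uN ∈ N := by
  classical
  have hccM : c * c + c ∈ M := by
    have h1 : c * (c + uM) ∈ M := M.mul_mem_left _ _ hcM
    have h2 : c * uM - c ∈ M := (huM c).1
    have key : c * c + c = c * (c + uM) - (c * uM - c) := by rw [mul_add]; abel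
    exact key ▸ M.sub_mem h1 h2
  have hccZ : c * c + c ∈ centerSet X := centerSet_add (centerSet_mul hc hc) hc
  have hccN : c * c + c ∈ N := by
    have : c * c + c ∈ (M : Set X) ∩ centerSet X := ⟨hccM, hccZ⟩
    exact (hZ ▸ this).1
  set J : TwoSidedIdeal X := TwoSidedIdeal.mk' {x : X | c * x + x ∈ N}
    (by simp only [Set.mem_setOf_eq, mul_zero, add_zero]; exact N.zero_mem)
    (fun {x y} hx hy => by
      simp only [Set.mem_setOf_eq, mul_add] at *
      have := N.add_mem hx hy
      convert this using 1; abel)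
    (fun {x} hx => by
      simp only [Set.mem_setOf_eq, mul_neg] at *
      have := N.neg_mem hx
      convert this using 1; abel)
    (fun {a x} hx => by
      simp only [Set.mem_setOf_eq] at *
      have key : c * (a * x) + a * x = a * (c * x + x) := by
        rw [hc (a * x), mul_assoc, ← hc x, mul_add]
      rw [key]
      exact N.mul_mem_left _ _ hx)
    (fun {x a} hx => by
      simp only [Set.mem_setOf_eq] at *
      have key : c * (x * a) + x * a = (c * x + x) * a := by
        rw [← mul_assoc, add_mul]
      rw [key]
      exact N.mul_mem_right _ _ hx) with hJdef
  have hNJ : N ≤ J := fun n hn => by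
    rw [hJdef, TwoSidedIdeal.mem_mk']
    exact N.add_mem (N.mul_mem_left _ _ hn) hn
  have hcJ : c ∈ J := by rw [hJdef, TwoSidedIdeal.mem_mk']; exact hccN
  by_cases hJ : J = ⊤
  · have huNJ : c * uN + uN ∈ N := by
      have : uN ∈ J := mem_of_eq_top hJ _
      rwa [hJdef, TwoSidedIdeal.mem_mk'] at this
    have h2 : c * uN - c ∈ N := (huN c).1
    have key : c + uN = (c * uN + uN) - (c * uN - c) := by abel
    exact key ▸ N.sub_mem huNJ h2
  · exfalso
    have hJN : J = N := hN.2.2 J hNJ hJ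
    have hcN : c ∈ N := hJN ▸ hcJ
    have hcMm : c ∈ M := by
      have : c ∈ (N : Set X) ∩ centerSet X := ⟨hcN, hc⟩
      exact (hZ.symm ▸ this).1
    have huMm : uM ∈ M := by
      have := M.sub_mem hcM hcMm; simpa using this
    exact hM.2.1 (eq_top_of_unit_mem huM huMm)

end WCAux

open WCAux in
/-- A non-unital Banach *-algebra `X` is weakly central iff its
unitization `X̃ = X ⊕ ℂ` is weakly central. -/
theorem weaklyCentral_iff_unitization
    {X : Type*} [NonUnitalNormedRing X] [NormedSpace ℂ X] [CompleteSpace X]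
    [IsScalarTower ℂ X X] [SMulCommClass ℂ X X]
    [StarRing X] [StarModule ℂ X]
    (hnu : ¬ ∃ e : X, ∀ x : X, e * x = x ∧ x * e = x) :
    WeaklyCentral X ↔ WeaklyCentral (Unitization ℂ X) := by
  classical
  constructor
  · -- forward
    intro hX
    constructor
    · intro N hN hsub
      by_cases hall : ∀ x : X, (x : Unitization ℂ X) ∈ N
      · have hNu : N = unitIdeal := eq_unitIdeal hN hall
        have h1 : (1 : Unitization ℂ X) ∈ N := hsub one_mem_centerSet
        rw [hNu, mem_unitIdeal] at h1
        simp at h1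
      · push_neg at hall
        obtain ⟨u, hu1⟩ := exists_unit_coe hN hall
        have hR : (restr N).IsMaxMod := restr_isMaxMod hN hu1 hall
        refine hX.1 (restr N) hR fun z hz => ?_
        exact mem_restr.mpr (hsub (coe_mem_centerSet hz))
    · intro N₁ N₂ h₁ h₂ hZ
      by_cases hall₁ : ∀ x : X, (x : Unitization ℂ X) ∈ N₁
      · by_cases hall₂ : ∀ x : X, (x : Unitization ℂ X) ∈ N₂
        · rw [eq_unitIdeal h₁ hall₁, eq_unitIdeal h₂ hall₂]
        · exfalso
          push_neg at hall₂
          obtain ⟨u, hu1⟩ := exists_unit_coe h₂ hall₂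
          have hR : (restr N₂).IsMaxMod := restr_isMaxMod h₂ hu1 hall₂
          refine hX.1 (restr N₂) hR fun z hz => ?_
          have hz1 : (z : Unitization ℂ X) ∈ (N₁ : Set (Unitization ℂ X)) ∩
              centerSet (Unitization ℂ X) := ⟨hall₁ z, coe_mem_centerSet hz⟩
          exact mem_restr.mpr (hZ ▸ hz1).1
      · by_cases hall₂ : ∀ x : X, (x : Unitization ℂ X) ∈ N₂
        · exfalso
          push_neg at hall₁
          obtain ⟨u, hu1⟩ := exists_unit_coe h₁ hall₁
          have hR : (restr N₁).IsMaxMod := restr_isMaxMod h₁ hu1 hall₁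
          refine hX.1 (restr N₁) hR fun z hz => ?_
          have hz2 : (z : Unitization ℂ X) ∈ (N₂ : Set (Unitization ℂ X)) ∩
              centerSet (Unitization ℂ X) := ⟨hall₂ z, coe_mem_centerSet hz⟩
          exact mem_restr.mpr (hZ.symm ▸ hz2).1
        · push_neg at hall₁ hall₂
          obtain ⟨u₁, hu₁⟩ := exists_unit_coe h₁ hall₁
          obtain ⟨u₂, hu₂⟩ := exists_unit_coe h₂ hall₂
          have hR₁ : (restr N₁).IsMaxMod := restr_isMaxMod h₁ hu₁ hall₁
          have hR₂ : (restr N₂).IsMaxMod := restr_isMaxMod h₂ hu₂ hall₂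
          have hZr : ((restr N₁ : TwoSidedIdeal X) : Set X) ∩ centerSet X =
              ((restr N₂ : TwoSidedIdeal X) : Set X) ∩ centerSet X := by
            ext z
            constructor
            · rintro ⟨hz1, hz2⟩
              have : (z : Unitization ℂ X) ∈ (N₁ : Set (Unitization ℂ X)) ∩
                  centerSet (Unitization ℂ X) := ⟨mem_restr.mp hz1, coe_mem_centerSet hz2⟩
              exact ⟨mem_restr.mpr (hZ ▸ this).1, hz2⟩
            · rintro ⟨hz1, hz2⟩
              have : (z : Unitization ℂ X) ∈ (N₂ : Set (Unitization ℂ X)) ∩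
                  centerSet (Unitization ℂ X) := ⟨mem_restr.mp hz1, coe_mem_centerSet hz2⟩
              exact ⟨mem_restr.mpr (hZ.symm ▸ this).1, hz2⟩
          have hRR : restr N₁ = restr N₂ := hX.2 _ _ hR₁ hR₂ hZr
          have hru₁ : IsUnit' (restr N₁) u₁ := restr_isUnit' hu₁
          have hru₂ : IsUnit' (restr N₂) u₂ := restr_isUnit' hu₂
          have hru₂' : IsUnit' (restr N₁) u₂ := hRR ▸ hru₂
          calc N₁ = extI (restr N₁) u₁ hru₁ := (extI_restr_eq h₁ hu₁ hru₁).symm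
            _ = extI (restr N₁) u₂ hru₂' := extI_unit_irrel hru₁ hru₂'
            _ = extI (restr N₂) u₂ hru₂ := extI_congr hRR hru₂' hru₂
            _ = N₂ := extI_restr_eq h₂ hu₂ hru₂
  · -- backward
    intro hXt
    constructor
    · intro M hM hsub
      obtain ⟨u, hu⟩ := hM.1
      have hue : IsUnit' M u := hu
      have hMe : (extI M u hue).IsMaxMod := extI_isMaxMod hM hue
      have huM : u ∉ M := fun h => hM.2.1 (eq_top_of_unit_mem hue h)
      have hset : ((extI M u hue : TwoSidedIdeal (Unitization ℂ X)) : Set (Unitization ℂ X)) ∩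
          centerSet (Unitization ℂ X) =
          ((unitIdeal : TwoSidedIdeal (Unitization ℂ X)) : Set (Unitization ℂ X)) ∩
          centerSet (Unitization ℂ X) := by
        ext z
        constructor
        · rintro ⟨hz1, hz2⟩
          refine ⟨?_, hz2⟩
          have hzs : z.snd ∈ M := hsub (mem_centerSet_unitization.mp hz2)
          have h2 : z.fst • u ∈ M := by
            have hz1' : z.snd + z.fst • u ∈ M := mem_extI.mp hz1
            have := M.sub_mem hz1' hzs; simpa using this
          rw [SetLike.mem_coe, mem_unitIdeal]
          by_contra hf
          refine huM ?_
          have := smul_mem_of_unit hue h2 z.fst⁻¹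
          rwa [smul_smul, inv_mul_cancel₀ hf, one_smul] at this
        · rintro ⟨hz1, hz2⟩
          refine ⟨?_, hz2⟩
          have hz0 : z.fst = 0 := mem_unitIdeal.mp hz1
          have hzs : z.snd ∈ M := hsub (mem_centerSet_unitization.mp hz2)
          rw [SetLike.mem_coe, mem_extI, hz0, zero_smul, add_zero]
          exact hzs
      have := hXt.2 _ _ hMe unitIdeal_isMaxMod hset
      have hcontra : (u : Unitization ℂ X) ∈ extI M u hue := by
        rw [this]; exact coe_mem_unitIdeal u
      exact huM (coe_mem_extI.mp hcontra)
    · intro M N hM hN hZ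
      obtain ⟨uM, huM⟩ := hM.1
      obtain ⟨uN, huN⟩ := hN.1
      have huMe : IsUnit' M uM := huM
      have huNe : IsUnit' N uN := huN
      have key : ∀ (M N : TwoSidedIdeal X) (hM : M.IsMaxMod) (hN : N.IsMaxMod)
          (uM uN : X) (huMe : IsUnit' M uM) (huNe : IsUnit' N uN),
          (M : Set X) ∩ centerSet X = (N : Set X) ∩ centerSet X →
          ∀ z : Unitization ℂ X, z ∈ extI M uM huMe → z ∈ centerSet (Unitization ℂ X) →
          z ∈ extI N uN huNe := by
        intro M N hM hN uM uN huMe huNe hZ z hz1 hz2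
        have hzc : z.snd ∈ centerSet X := mem_centerSet_unitization.mp hz2
        have hz1' : z.snd + z.fst • uM ∈ M := mem_extI.mp hz1
        rw [mem_extI]
        by_cases hf : z.fst = 0
        · rw [hf, zero_smul, add_zero]
          rw [hf, zero_smul, add_zero] at hz1'
          have : z.snd ∈ (M : Set X) ∩ centerSet X := ⟨hz1', hzc⟩
          exact (hZ ▸ this).1
        · set c : X := z.fst⁻¹ • z.snd with hc
          have hcZ : c ∈ centerSet X := centerSet_smul hzc _
          have hcM : c + uM ∈ M := by
            have := smul_mem_of_unit huMe hz1' z.fst⁻¹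
            rwa [smul_add, smul_smul, inv_mul_cancel₀ hf, one_smul, ← hc] at this
          have hcN : c + uN ∈ N := center_shift hM hN huMe huNe hZ hcZ hcM
          have := smul_mem_of_unit huNe hcN z.fst
          rwa [smul_add, hc, smul_smul, mul_inv_cancel₀ hf, one_smul] at this
      have hset : ((extI M uM huMe : TwoSidedIdeal (Unitization ℂ X)) :
          Set (Unitization ℂ X)) ∩ centerSet (Unitization ℂ X) =
          ((extI N uN huNe : TwoSidedIdeal (Unitization ℂ X)) :
          Set (Unitization ℂ X)) ∩ centerSet (Unitization ℂ X) := by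
        ext z
        exact ⟨fun ⟨h1, h2⟩ => ⟨key M N hM hN uM uN huMe huNe hZ z h1 h2, h2⟩,
          fun ⟨h1, h2⟩ => ⟨key N M hN hM uN uM huNe huMe hZ.symm z h1 h2, h2⟩⟩
      have hMe : (extI M uM huMe).IsMaxMod := extI_isMaxMod hM huMe
      have hNe : (extI N uN huNe).IsMaxMod := extI_isMaxMod hN huNe
      have heq := hXt.2 _ _ hMe hNe hset
      calc M = restr (extI M uM huMe) := (restr_extI huMe).symm
        _ = restr (extI N uN huNe) := by rw [heq]
        _ = N := restr_extI huNe
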